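/- For any fixed δ > 0, lim_{ε → 0+} (1/(ε² log ε)) · ∫_ε^δ [exp(ε/x)·(x - ε) - x] dx = 1/2. -/

import Mathlib

open Filter Set intervalIntegral

noncomputable def rfn (ε x : ℝ) : ℝ := Real.exp (ε / x) * (x - ε) - x + ε ^ 2 / (2 * x)

lemma taylor2 {t : ℝ} (h0 : 0 ≤ t) (h1 : t ≤ 1) :
    |Real.exp t - (1 + t)| ≤ t ^ 2 := by
  have h := Real.exp_bound (n := 2) (x := t) (by rwa [abs_of_nonneg h0]) (by norm_num)
  have hs : ∑ m ∈ Finset.range 2, t ^ m / (Nat.factorial m) = 1 + t := by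
    simp [Finset.sum_range_succ]
  rw [hs, abs_of_nonneg h0] at h
  calc |Real.exp t - (1 + t)| ≤ t ^ 2 * ((2:ℕ).succ / ((Nat.factorial 2 : ℕ) * 2)) := h
    _ ≤ t ^ 2 := by norm_num [Nat.factorial]; nlinarith [sq_nonneg t]

lemma taylor3 {t : ℝ} (h0 : 0 ≤ t) (h1 : t ≤ 1) :
    |Real.exp t - (1 + t + t ^ 2 / 2)| ≤ t ^ 3 := by
  have h := Real.exp_bound (n := 3) (x := t) (by rwa [abs_of_nonneg h0]) (by norm_num)
  have hs : ∑ m ∈ Finset.range 3, t ^ m / (Nat.factorial m) = 1 + t + t ^ 2 / 2 := by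
    simp [Finset.sum_range_succ]
  rw [hs, abs_of_nonneg h0] at h
  calc |Real.exp t - (1 + t + t ^ 2 / 2)|
      ≤ t ^ 3 * ((3:ℕ).succ / ((Nat.factorial 3 : ℕ) * 3)) := h
    _ ≤ t ^ 3 := by
        norm_num [Nat.factorial]
        nlinarith [pow_nonneg h0 3]

lemma rfn_bound {ε x : ℝ} (hε : 0 < ε) (hx : ε ≤ x) :
    |rfn ε x| ≤ 2 * ε ^ 3 / x ^ 2 := by
  have hx0 : 0 < x := lt_of_lt_of_le hε hx
  set t := ε / x with ht
  have ht0 : 0 ≤ t := le_of_lt (div_pos hε hx0)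
  have ht1 : t ≤ 1 := (div_le_one hx0).mpr hx
  have hid : rfn ε x = x * (Real.exp t - (1 + t + t ^ 2 / 2)) - ε * (Real.exp t - (1 + t)) := by
    simp only [rfn, ht]
    field_simp
    ring
  have h2 := taylor2 ht0 ht1
  have h3 := taylor3 ht0 ht1
  have key : |rfn ε x| ≤ x * t ^ 3 + ε * t ^ 2 := by
    rw [hid]
    calc |x * (Real.exp t - (1 + t + t ^ 2 / 2)) - ε * (Real.exp t - (1 + t))|
        ≤ |x * (Real.exp t - (1 + t + t ^ 2 / 2))| + |ε * (Real.exp t - (1 + t))| :=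
          abs_sub _ _
      _ ≤ x * t ^ 3 + ε * t ^ 2 := by
          rw [abs_mul, abs_mul, abs_of_pos hx0, abs_of_pos hε]
          gcongr
  refine key.trans (le_of_eq ?_)
  rw [ht]
  field_simp
  ring

lemma cont_h {ε δ : ℝ} (hε : 0 < ε) (hεδ : ε ≤ δ) :
    ContinuousOn (fun x => Real.exp (ε / x) * (x - ε) - x) (Set.uIcc ε δ) := by
  have hne : ∀ x ∈ Set.uIcc ε δ, x ≠ 0 := by
    intro x hx
    rw [Set.uIcc_of_le hεδ] at hx
    exact ne_of_gt (lt_of_lt_of_le hε hx.1)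
  exact (((Real.continuous_exp.comp_continuousOn
      (continuousOn_const.div continuousOn_id hne)).mul
      (continuousOn_id.sub continuousOn_const)).sub continuousOn_id)

lemma cont_inv {ε δ : ℝ} (hε : 0 < ε) (hεδ : ε ≤ δ) :
    ContinuousOn (fun x : ℝ => ε ^ 2 / (2 * x)) (Set.uIcc ε δ) := by
  have hne : ∀ x ∈ Set.uIcc ε δ, (2 : ℝ) * x ≠ 0 := by
    intro x hx
    rw [Set.uIcc_of_le hεδ] at hx
    have : 0 < x := lt_of_lt_of_le hε hx.1
    positivity
  exact continuousOn_const.div (continuousOn_const.mul continuousOn_id) hne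

lemma integrable_h {ε δ : ℝ} (hε : 0 < ε) (hεδ : ε ≤ δ) :
    IntervalIntegrable (fun x => Real.exp (ε / x) * (x - ε) - x) MeasureTheory.volume ε δ :=
  (cont_h hε hεδ).intervalIntegrable

lemma integrable_inv {ε δ : ℝ} (hε : 0 < ε) (hεδ : ε ≤ δ) :
    IntervalIntegrable (fun x : ℝ => ε ^ 2 / (2 * x)) MeasureTheory.volume ε δ :=
  (cont_inv hε hεδ).intervalIntegrable

lemma integrable_rfn {ε δ : ℝ} (hε : 0 < ε) (hεδ : ε ≤ δ) :
    IntervalIntegrable (rfn ε) MeasureTheory.volume ε δ := by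
  have := (integrable_h hε hεδ).add (integrable_inv hε hεδ)
  exact this

lemma integral_eq {ε δ : ℝ} (hε : 0 < ε) (hεδ : ε ≤ δ) :
    (∫ x in ε..δ, (Real.exp (ε / x) * (x - ε) - x))
      = ε ^ 2 / 2 * (Real.log ε - Real.log δ) + ∫ x in ε..δ, rfn ε x := by
  have hδ0 : 0 < δ := lt_of_lt_of_le hε hεδ
  have h1 : (∫ x in ε..δ, (Real.exp (ε / x) * (x - ε) - x))
      = (∫ x in ε..δ, rfn ε x) - ∫ x in ε..δ, ε ^ 2 / (2 * x) := by
    rw [← intervalIntegral.integral_sub (integrable_rfn hε hεδ) (integrable_inv hε hεδ)]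
    congr 1
    ext x
    simp [rfn]
  have h2 : (∫ x in ε..δ, ε ^ 2 / (2 * x)) = ε ^ 2 / 2 * (Real.log δ - Real.log ε) := by
    have : (fun x : ℝ => ε ^ 2 / (2 * x)) = fun x : ℝ => ε ^ 2 / 2 * x⁻¹ := by
      ext x; rw [div_mul_eq_div_div]; ring
    rw [this, intervalIntegral.integral_const_mul, integral_inv_of_pos hε hδ0,
      Real.log_div (ne_of_gt hδ0) (ne_of_gt hε)]
  rw [h1, h2]; ring

lemma err_bound {ε δ : ℝ} (hε : 0 < ε) (hεδ : ε ≤ δ) :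
    |∫ x in ε..δ, rfn ε x| ≤ 2 * ε ^ 2 := by
  have hδ0 : 0 < δ := lt_of_lt_of_le hε hεδ
  have h0 : (0 : ℝ) ∉ Set.uIcc ε δ := by
    rw [Set.uIcc_of_le hεδ]
    intro h
    exact absurd h.1 (not_le.mpr hε)
  have hgint : IntervalIntegrable (fun x : ℝ => 2 * ε ^ 3 * x ^ (-2 : ℤ))
      MeasureTheory.volume ε δ :=
    (intervalIntegrable_zpow (Or.inr h0)).const_mul _
  have hb : ‖∫ x in ε..δ, rfn ε x‖ ≤ |∫ x in ε..δ, 2 * ε ^ 3 * x ^ (-2 : ℤ)| := by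
    apply intervalIntegral.norm_integral_le_abs_of_norm_le _ hgint
    rw [MeasureTheory.ae_restrict_iff' measurableSet_uIoc]
    filter_upwards with x hx
    rw [Set.uIoc_of_le hεδ] at hx
    have hεx : ε ≤ x := le_of_lt hx.1
    have hx0 : 0 < x := lt_of_lt_of_le hε hεx
    have := rfn_bound hε hεx
    rw [Real.norm_eq_abs]
    refine this.trans (le_of_eq ?_)
    rw [zpow_neg, zpow_two]
    field_simp
  have hval : (∫ x in ε..δ, 2 * ε ^ 3 * x ^ (-2 : ℤ))
      = 2 * ε ^ 3 * (ε⁻¹ - δ⁻¹) := by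
    rw [intervalIntegral.integral_const_mul, integral_zpow (Or.inr ⟨by norm_num, h0⟩)]
    norm_num
    left
    ring
  rw [Real.norm_eq_abs] at hb
  refine hb.trans ?_
  have hinv : δ⁻¹ ≤ ε⁻¹ := by
    apply inv_anti₀ hε hεδ
  rw [hval, abs_of_nonneg (by
    have : (0:ℝ) ≤ ε⁻¹ - δ⁻¹ := sub_nonneg.mpr hinv
    positivity)]
  have h1 : 2 * ε ^ 3 * (ε⁻¹ - δ⁻¹) ≤ 2 * ε ^ 3 * ε⁻¹ := by
    gcongr
    linarith [inv_nonneg.mpr hδ0.le]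
  refine h1.trans (le_of_eq ?_)
  field_simp

theorem tail_integral_limit_one (δ : ℝ) (hδ : 0 < δ) :
    Tendsto (fun ε : ℝ => (1 / (ε ^ 2 * Real.log ε)) *
        ∫ x in ε..δ, (Real.exp (ε / x) * (x - ε) - x))
      (nhdsWithin 0 (Ioi (0:ℝ))) (nhds (1/2)) := by
  set m := min δ 1 with hm
  have hm0 : 0 < m := lt_min hδ one_pos
  have hmem : Ioo (0:ℝ) m ∈ nhdsWithin (0:ℝ) (Ioi (0:ℝ)) :=
    Ioo_mem_nhdsGT_of_mem ⟨le_refl 0, hm0⟩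
  have hloginv : Tendsto (fun ε : ℝ => (Real.log ε)⁻¹) (nhdsWithin (0:ℝ) (Ioi (0:ℝ)))
      (nhds 0) := by
    have hneg : Tendsto (fun ε : ℝ => -Real.log ε) (nhdsWithin (0:ℝ) (Ioi (0:ℝ))) atTop :=
      tendsto_neg_atBot_atTop.comp Real.tendsto_log_nhdsGT_zero
    have h2 := hneg.inv_tendsto_atTop
    have h3 := h2.neg
    simp only [Pi.inv_apply, inv_neg, neg_neg, neg_zero] at h3
    exact h3
  have hA : Tendsto (fun ε : ℝ => 1/2 - Real.log δ / 2 * (Real.log ε)⁻¹)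
      (nhdsWithin (0:ℝ) (Ioi (0:ℝ))) (nhds (1/2)) := by
    have := (hloginv.const_mul (Real.log δ / 2)).const_sub ((1:ℝ)/2)
    simpa using this
  have habs : Tendsto (fun ε : ℝ => 2 * |Real.log ε|⁻¹)
      (nhdsWithin (0:ℝ) (Ioi (0:ℝ))) (nhds 0) := by
    have h1 : Tendsto (fun ε : ℝ => |Real.log ε|) (nhdsWithin (0:ℝ) (Ioi (0:ℝ))) atTop :=
      tendsto_abs_atBot_atTop.comp Real.tendsto_log_nhdsGT_zero
    have h2 := h1.inv_tendsto_atTop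
    have := h2.const_mul (2:ℝ)
    simpa using this
  have hB : Tendsto (fun ε : ℝ => (∫ x in ε..δ, rfn ε x) / (ε ^ 2 * Real.log ε))
      (nhdsWithin (0:ℝ) (Ioi (0:ℝ))) (nhds 0) := by
    apply squeeze_zero_norm' _ habs
    filter_upwards [hmem] with ε hε
    have hε0 : 0 < ε := hε.1
    have hε1 : ε < 1 := lt_of_lt_of_le hε.2 (min_le_right δ 1)
    have hεδ : ε ≤ δ := le_of_lt (lt_of_lt_of_le hε.2 (min_le_left δ 1))
    have hlogneg : Real.log ε < 0 := Real.log_neg hε0 hε1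
    have hlogpos : 0 < |Real.log ε| := abs_pos.mpr (ne_of_lt hlogneg)
    have herr := err_bound hε0 hεδ
    rw [Real.norm_eq_abs, abs_div, abs_mul, abs_pow, abs_of_pos hε0]
    calc |∫ x in ε..δ, rfn ε x| / (ε ^ 2 * |Real.log ε|)
        ≤ (2 * ε ^ 2) / (ε ^ 2 * |Real.log ε|) := by gcongr
      _ = 2 * |Real.log ε|⁻¹ := by
          field_simp
  have hsum := hA.add hB
  have h12 : (1:ℝ)/2 + 0 = 1/2 := by norm_num
  rw [h12] at hsum
  apply hsum.congr'
  filter_upwards [hmem] with ε hε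
  have hε0 : 0 < ε := hε.1
  have hε1 : ε < 1 := lt_of_lt_of_le hε.2 (min_le_right δ 1)
  have hεδ : ε ≤ δ := le_of_lt (lt_of_lt_of_le hε.2 (min_le_left δ 1))
  have hlogne : Real.log ε ≠ 0 := ne_of_lt (Real.log_neg hε0 hε1)
  have hεne : ε ≠ 0 := ne_of_gt hε0
  rw [integral_eq hε0 hεδ]
  field_simp
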